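/- arXiv:1209.4541 — 4 statements merged into one kernel-verified Lean document; each statement's English description precedes it below -/
import Mathlib

section
/- Let E be a real normed space and D ⊆ E a nonempty open set with nonempty boundary. Define the distance ratio metric j_D(z₁,z₂) = log(1 + |z₁ - z₂| / min(d_D(z₁), d_D(z₂))) for z₁, z₂ ∈ D, where d_D(z) = dist(z, ∂D). Then j_D is a metric on D. -/
open Set Metric Real intervalIntegral

noncomputable def dD {E : Type*} [NormedAddCommGroup E] [NormedSpace ℝ E]
    (D : Set E) (z : E) : ℝ := Metric.infDist z (frontier D)

noncomputable def jD {E : Type*} [NormedAddCommGroup E] [NormedSpace ℝ E]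
    (D : Set E) (z₁ z₂ : E) : ℝ :=
  Real.log (1 + dist z₁ z₂ / min (dD D z₁) (dD D z₂))

noncomputable def clen {E : Type*} [NormedAddCommGroup E] [NormedSpace ℝ E]
    (γ : ℝ → E) : ℝ := ∫ t in (0:ℝ)..1, ‖deriv γ t‖

noncomputable def sublen {E : Type*} [NormedAddCommGroup E] [NormedSpace ℝ E]
    (γ : ℝ → E) (a b : ℝ) : ℝ := ∫ t in a..b, ‖deriv γ t‖

noncomputable def qhLen {E : Type*} [NormedAddCommGroup E] [NormedSpace ℝ E]
    (D : Set E) (γ : ℝ → E) : ℝ := ∫ t in (0:ℝ)..1, ‖deriv γ t‖ / dD D (γ t)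

def IsCurveIn {E : Type*} [NormedAddCommGroup E] [NormedSpace ℝ E]
    (D : Set E) (γ : ℝ → E) (z₁ z₂ : E) : Prop :=
  ContDiffOn ℝ 1 γ (Set.Icc 0 1) ∧ γ 0 = z₁ ∧ γ 1 = z₂ ∧
    ∀ t ∈ Set.Icc (0:ℝ) 1, γ t ∈ D

noncomputable def kD {E : Type*} [NormedAddCommGroup E] [NormedSpace ℝ E]
    (D : Set E) (z₁ z₂ : E) : ℝ :=
  sInf {l : ℝ | ∃ γ : ℝ → E, IsCurveIn D γ z₁ z₂ ∧ l = qhLen D γ}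

def IsUniform {E : Type*} [NormedAddCommGroup E] [NormedSpace ℝ E]
    (D : Set E) (c : ℝ) : Prop :=
  ∀ z₁ ∈ D, ∀ z₂ ∈ D, ∃ γ : ℝ → E, IsCurveIn D γ z₁ z₂ ∧
    clen γ ≤ c * dist z₁ z₂ ∧
    ∀ t ∈ Set.Icc (0:ℝ) 1,
      min (sublen γ 0 t) (sublen γ t 1) ≤ c * dD D (γ t)

variable {E : Type*} [NormedAddCommGroup E] [NormedSpace ℝ E]

lemma dD_pos (D : Set E) (hD : IsOpen D) (hbd : (frontier D).Nonempty)
    {z : E} (hz : z ∈ D) : 0 < dD D z := by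
  rw [dD, ← isClosed_frontier.notMem_iff_infDist_pos hbd]
  intro h
  have hmem : z ∈ D ∩ frontier D := ⟨hz, h⟩
  rw [hD.inter_frontier_eq] at hmem
  exact hmem

lemma dD_lip (D : Set E) (x y : E) : dD D x ≤ dD D y + dist x y :=
  Metric.infDist_le_infDist_add_dist (x := x) (y := y) (s := frontier D)

set_option maxHeartbeats 1000000 in
theorem stmt2 (D : Set E) (hD : IsOpen D) (hne : D.Nonempty)
    (hbd : (frontier D).Nonempty) :
    (∀ z₁ ∈ D, ∀ z₂ ∈ D, 0 ≤ jD D z₁ z₂) ∧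
    (∀ z₁ ∈ D, ∀ z₂ ∈ D, (jD D z₁ z₂ = 0 ↔ z₁ = z₂)) ∧
    (∀ z₁ ∈ D, ∀ z₂ ∈ D, jD D z₁ z₂ = jD D z₂ z₁) ∧
    (∀ z₁ ∈ D, ∀ z₂ ∈ D, ∀ z₃ ∈ D,
      jD D z₁ z₃ ≤ jD D z₁ z₂ + jD D z₂ z₃) := by
  have pos := fun {z} hz => dD_pos D hD hbd (z := z) hz
  refine ⟨?_, ?_, ?_, ?_⟩
  · intro z₁ h₁ z₂ h₂
    apply Real.log_nonneg
    have := div_nonneg (dist_nonneg (x := z₁) (y := z₂)) (le_of_lt (lt_min (pos h₁) (pos h₂)))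
    linarith
  · intro z₁ h₁ z₂ h₂
    have hm : 0 < min (dD D z₁) (dD D z₂) := lt_min (pos h₁) (pos h₂)
    rw [jD]
    constructor
    · intro h
      have h1 : (1 : ℝ) + dist z₁ z₂ / min (dD D z₁) (dD D z₂) = 1 := by
        have hx := div_nonneg (dist_nonneg (x := z₁) (y := z₂)) hm.le
        have := Real.exp_log (by linarith : (0:ℝ) < 1 + dist z₁ z₂ / min (dD D z₁) (dD D z₂))
        rw [h] at this
        simpa [Real.exp_zero] using this.symm
      have : dist z₁ z₂ / min (dD D z₁) (dD D z₂) = 0 := by linarith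
      have := (div_eq_zero_iff.mp this).resolve_right hm.ne'
      exact dist_eq_zero.mp this
    · rintro rfl; simp
  · intro z₁ h₁ z₂ h₂
    rw [jD, jD, dist_comm, min_comm]
  · intro z₁ h₁ z₂ h₂ z₃ h₃
    simp only [jD]
    set m1 := dD D z₁ with hm1
    set m2 := dD D z₂ with hm2
    set m3 := dD D z₃ with hm3
    have p1 : 0 < m1 := pos h₁
    have p2 : 0 < m2 := pos h₂
    have p3 : 0 < m3 := pos h₃
    set d12 := dist z₁ z₂
    set d23 := dist z₂ z₃
    set d13 := dist z₁ z₃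
    have hd12 : 0 ≤ d12 := dist_nonneg
    have hd23 : 0 ≤ d23 := dist_nonneg
    have htri : d13 ≤ d12 + d23 := dist_triangle z₁ z₂ z₃
    have l12 : m1 ≤ m2 + d12 := dD_lip D z₁ z₂
    have l21 : m2 ≤ m1 + d12 := by
      have := dD_lip D z₂ z₁; rwa [dist_comm] at this
    have l23 : m2 ≤ m3 + d23 := dD_lip D z₂ z₃
    have l32 : m3 ≤ m2 + d23 := by
      have := dD_lip D z₃ z₂; rwa [dist_comm] at this
    have hd13 : 0 ≤ d13 := dist_nonneg
    clear_value m1 m2 m3 d12 d23 d13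
    have pa : 0 < min m1 m3 := lt_min p1 p3
    have pp : 0 < min m1 m2 := lt_min p1 p2
    have pq : 0 < min m2 m3 := lt_min p2 p3
    have g1 : (0:ℝ) < 1 + d12 / min m1 m2 := by
      have := div_nonneg hd12 pp.le; linarith
    have g2 : (0:ℝ) < 1 + d23 / min m2 m3 := by
      have := div_nonneg hd23 pq.le; linarith
    have g3 : (0:ℝ) < 1 + d13 / min m1 m3 := by
      have := div_nonneg hd13 pa.le; linarith
    rw [← Real.log_mul g1.ne' g2.ne']
    apply Real.log_le_log g3
    rw [add_div' _ _ _ pa.ne', add_div' _ _ _ pp.ne', add_div' _ _ _ pq.ne',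
      div_mul_div_comm, div_le_div_iff₀ pa (by positivity)]
    simp only [one_mul]
    have key : (min m1 m3 + d13) * (min m1 m2 * min m2 m3) ≤
        (min m1 m2 + d12) * (min m2 m3 + d23) * min m1 m3 := by
      rcases min_cases m1 m3 with ⟨e13, i13⟩ | ⟨e13, i13⟩ <;>
      rcases min_cases m1 m2 with ⟨e12, i12⟩ | ⟨e12, i12⟩ <;>
      rcases min_cases m2 m3 with ⟨e23, i23⟩ | ⟨e23, i23⟩ <;>
      rw [e13, e12, e23] <;>
      nlinarith [mul_nonneg hd12 hd23, mul_nonneg hd12 hd12, mul_nonneg hd23 hd23,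
        mul_pos p1 p2, mul_pos p2 p3, mul_pos p1 p3,
        mul_nonneg hd12 p2.le, mul_nonneg hd23 p2.le,
        mul_nonneg hd12 p1.le, mul_nonneg hd23 p1.le,
        mul_nonneg hd12 p3.le, mul_nonneg hd23 p3.le]
    linarith [key]
end

section
/- Let E be a real normed space, D ⊆ E open with nonempty boundary, and let γ be a rectifiable curve in D joining z₁ to z₂. Then the quasihyperbolic length ℓ_{k_D}(γ) = ∫_γ |dz|/d_D(z) satisfies ℓ_{k_D}(γ) ≥ log(1 + ℓ(γ)/min(d_D(z₁), d_D(z₂))), where ℓ(γ) is the Euclidean length of γ. -/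
open Set Metric Real intervalIntegral
open MeasureTheory

lemma logInt (f g : ℝ → ℝ) (c : ℝ) (hc : 0 < c)
    (hf : ContinuousOn f (Icc 0 1)) (hf0 : ∀ t ∈ Icc (0:ℝ) 1, 0 ≤ f t)
    (hg : ContinuousOn g (Icc 0 1)) (hg0 : ∀ t ∈ Icc (0:ℝ) 1, 0 < g t)
    (hbound : ∀ t ∈ Icc (0:ℝ) 1, g t ≤ c + ∫ u in (0:ℝ)..t, f u) :
    Real.log (1 + (∫ u in (0:ℝ)..1, f u) / c) ≤ ∫ t in (0:ℝ)..1, f t / g t := by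
  set s : ℝ → ℝ := fun t => ∫ u in (0:ℝ)..t, f u with hs
  have hfint : ∀ t ∈ Icc (0:ℝ) 1, IntervalIntegrable f volume 0 t := fun t ht =>
    (hf.mono (by rw [uIcc_of_le ht.1]; exact Icc_subset_Icc le_rfl ht.2)).intervalIntegrable
  have hscont : ContinuousOn s (Icc 0 1) := by
    rw [show Icc (0:ℝ) 1 = uIcc 0 1 from (uIcc_of_le zero_le_one).symm]
    exact intervalIntegral.continuousOn_primitive_interval
      (by rw [uIcc_of_le zero_le_one]; exact hf.integrableOn_Icc)
  have hsnn : ∀ t ∈ Icc (0:ℝ) 1, 0 ≤ s t := fun t ht =>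
    intervalIntegral.integral_nonneg ht.1 (fun u hu => hf0 u ⟨hu.1, hu.2.trans ht.2⟩)
  have hcs : ∀ t ∈ Icc (0:ℝ) 1, 0 < c + s t := fun t ht => by
    have := hsnn t ht; linarith
  have hsderiv : ∀ x ∈ Ioo (0:ℝ) 1, HasDerivAt s (f x) x := by
    intro x hx
    have hxI : Icc (0:ℝ) 1 ∈ nhds x := Icc_mem_nhds hx.1 hx.2
    refine intervalIntegral.integral_hasDerivAt_right (hfint x ⟨hx.1.le, hx.2.le⟩)
      (AEStronglyMeasurable.stronglyMeasurableAtFilter_of_mem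
        (hf.aestronglyMeasurable measurableSet_Icc) hxI)
      (hf.continuousAt hxI)
  have hhderiv : ∀ x ∈ Ioo (0:ℝ) 1, HasDerivAt (fun t => Real.log (c + s t))
      (f x / (c + s x)) x := by
    intro x hx
    have h1 : HasDerivAt (fun t => c + s t) (f x) x := by
      exact (hsderiv x hx).const_add c
    simpa using h1.log (hcs x ⟨hx.1.le, hx.2.le⟩).ne'
  have hint2 : IntervalIntegrable (fun x => f x / (c + s x)) volume 0 1 := by
    apply ContinuousOn.intervalIntegrable
    rw [uIcc_of_le zero_le_one]
    exact hf.div (continuousOn_const.add hscont) (fun t ht => (hcs t ht).ne')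
  have hftc : ∫ x in (0:ℝ)..1, f x / (c + s x)
      = Real.log (c + s 1) - Real.log (c + s 0) := by
    refine intervalIntegral.integral_eq_sub_of_hasDerivAt_of_le zero_le_one
      ?_ hhderiv hint2
    exact Real.continuousOn_log.comp (continuousOn_const.add hscont)
      (fun t ht => (hcs t ht).ne')
  have hs0 : s 0 = 0 := intervalIntegral.integral_same
  have hmono : ∫ x in (0:ℝ)..1, f x / (c + s x) ≤ ∫ t in (0:ℝ)..1, f t / g t := by
    apply intervalIntegral.integral_mono_on zero_le_one hint2
    · apply ContinuousOn.intervalIntegrable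
      rw [uIcc_of_le zero_le_one]
      exact hf.div hg (fun t ht => (hg0 t ht).ne')
    · intro t ht
      exact div_le_div_of_nonneg_left (hf0 t ht) (hg0 t ht) (hbound t ht)
  have hlogeq : Real.log (1 + s 1 / c) = Real.log (c + s 1) - Real.log c := by
    rw [← Real.log_div (hcs 1 (by norm_num)).ne' hc.ne']
    congr 1
    field_simp
  calc Real.log (1 + s 1 / c) = Real.log (c + s 1) - Real.log (c + s 0) := by
        rw [hs0, add_zero, hlogeq]
    _ = ∫ x in (0:ℝ)..1, f x / (c + s x) := hftc.symm
    _ ≤ ∫ t in (0:ℝ)..1, f t / g t := hmono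

lemma distBound {E : Type*} [NormedAddCommGroup E] [NormedSpace ℝ E] (γ : ℝ → E)
    (hγ : ContDiffOn ℝ 1 γ (Icc 0 1)) {a b : ℝ} (ha : 0 ≤ a) (hab : a ≤ b) (hb : b ≤ 1) :
    ‖γ b - γ a‖ ≤ ∫ u in a..b, ‖derivWithin γ (Icc 0 1) u‖ := by
  set φ : ℝ → E := derivWithin γ (Icc 0 1) with hφ
  have hφcont : ContinuousOn φ (Icc 0 1) :=
    hγ.continuousOn_derivWithin (uniqueDiffOn_Icc one_pos) le_rfl
  have hsub : Icc a b ⊆ Icc (0:ℝ) 1 := Icc_subset_Icc ha hb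
  have hnφ : ContinuousOn (fun u => ‖φ u‖) (Icc 0 1) := hφcont.norm
  set B : ℝ → ℝ := fun x => ∫ u in a..x, ‖φ u‖ with hB
  have hfc : ContinuousOn (fun x => γ x - γ a) (Icc a b) :=
    (hγ.continuousOn.mono hsub).sub continuousOn_const
  have hfd : ∀ x ∈ Ico a b, HasDerivWithinAt (fun x => γ x - γ a) (φ x) (Ici x) x := by
    intro x hx
    have hx1 : x ∈ Icc (0:ℝ) 1 := ⟨ha.trans hx.1, hx.2.le.trans hb⟩
    have hd : HasDerivWithinAt γ (φ x) (Icc 0 1) x :=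
      ((hγ.differentiableOn one_ne_zero) x hx1).hasDerivWithinAt
    have hmem : Icc x 1 ∈ nhdsWithin x (Ici x) :=
      Icc_mem_nhdsGE_of_mem ⟨le_rfl, lt_of_lt_of_le hx.2 hb⟩
    have hd2 : HasDerivWithinAt γ (φ x) (Ici x) x :=
      (hd.mono (Icc_subset_Icc hx1.1 le_rfl)).mono_of_mem_nhdsWithin hmem
    simpa using hd2.sub_const (γ a)
  have ha0 : ‖γ a - γ a‖ ≤ B a := by simp [hB]
  have hBc : ContinuousOn B (Icc a b) := by
    rw [show Icc a b = uIcc a b from (uIcc_of_le hab).symm]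
    exact intervalIntegral.continuousOn_primitive_interval
      (by rw [uIcc_of_le hab]; exact (hnφ.mono hsub).integrableOn_Icc)
  have hBd : ∀ x ∈ Ico a b, HasDerivWithinAt B (‖φ x‖) (Ici x) x := by
    intro x hx
    have hx1 : x ∈ Icc (0:ℝ) 1 := ⟨ha.trans hx.1, hx.2.le.trans hb⟩
    have hmem : Icc x 1 ∈ nhdsWithin x (Ici x) :=
      Icc_mem_nhdsGE_of_mem ⟨le_rfl, lt_of_lt_of_le hx.2 hb⟩
    have hmem2 : Icc (0:ℝ) 1 ∈ nhdsWithin x (Ici x) :=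
      Filter.mem_of_superset hmem (Icc_subset_Icc hx1.1 le_rfl)
    have hintx : IntervalIntegrable (fun u => ‖φ u‖) volume a x :=
      (hnφ.mono (by rw [uIcc_of_le hx.1]; exact Icc_subset_Icc ha (hx.2.le.trans hb))
        ).intervalIntegrable
    have hmem3 : Icc (0:ℝ) 1 ∈ nhdsWithin x (Ioi x) :=
      nhdsWithin_mono x Ioi_subset_Ici_self hmem2
    exact intervalIntegral.integral_hasDerivWithinAt_right (t := Ioi x) hintx
      (AEStronglyMeasurable.stronglyMeasurableAtFilter_of_mem
        (hnφ.aestronglyMeasurable measurableSet_Icc) hmem3)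
      ((hnφ x hx1).mono_of_mem_nhdsWithin hmem3)
  have key := image_norm_le_of_norm_deriv_right_le_deriv_boundary' hfc hfd ha0 hBc hBd
    (fun x _ => le_rfl)
  exact key ⟨hab, le_rfl⟩



variable {E : Type*} [NormedAddCommGroup E] [NormedSpace ℝ E]

theorem stmt4 (D : Set E) (hD : IsOpen D) (hbd : (frontier D).Nonempty)
    (z₁ z₂ : E) (h₁ : z₁ ∈ D) (h₂ : z₂ ∈ D)
    (γ : ℝ → E) (hγ : IsCurveIn D γ z₁ z₂) :
    qhLen D γ ≥ Real.log (1 + clen γ / min (dD D z₁) (dD D z₂)) := by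
  obtain ⟨hs, h0, h1, hmem⟩ := hγ
  set φ : ℝ → E := derivWithin γ (Icc 0 1) with hφdef
  set f : ℝ → ℝ := fun t => ‖φ t‖ with hfdef
  set g : ℝ → ℝ := fun t => dD D (γ t) with hgdef
  have hφcont : ContinuousOn φ (Icc 0 1) :=
    hs.continuousOn_derivWithin (uniqueDiffOn_Icc one_pos) le_rfl
  have hf : ContinuousOn f (Icc 0 1) := hφcont.norm
  have hf0 : ∀ t ∈ Icc (0:ℝ) 1, 0 ≤ f t := fun t _ => norm_nonneg _
  have hg : ContinuousOn g (Icc 0 1) :=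
    (Metric.continuous_infDist_pt (frontier D)).comp_continuousOn hs.continuousOn
  have hdpos : ∀ z ∈ D, 0 < dD D z := by
    intro z hz
    refine (isClosed_frontier.notMem_iff_infDist_pos hbd).1 ?_
    exact fun hzf => (disjoint_interior_frontier (s := D)).ne_of_mem
      (by rwa [hD.interior_eq]) hzf rfl
  have hg0 : ∀ t ∈ Icc (0:ℝ) 1, 0 < g t := fun t ht => hdpos _ (hmem t ht)
  have hne : ∀ᵐ t : ℝ ∂MeasureTheory.volume, t ≠ 1 := by
    rw [MeasureTheory.ae_iff]
    simp only [not_not, Set.setOf_eq_eq_singleton]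
    exact MeasureTheory.measure_singleton 1
  have hderiv_eq : ∀ᵐ t : ℝ ∂MeasureTheory.volume, t ∈ Set.uIoc (0:ℝ) 1 → deriv γ t = φ t := by
    filter_upwards [hne] with t ht hmem'
    rw [Set.uIoc_of_le zero_le_one] at hmem'
    have htI : t ∈ Ioo (0:ℝ) 1 := ⟨hmem'.1, lt_of_le_of_ne hmem'.2 ht⟩
    rw [hφdef, derivWithin_of_mem_nhds (Icc_mem_nhds htI.1 htI.2)]
  have hqh : qhLen D γ = ∫ t in (0:ℝ)..1, f t / g t := by
    apply intervalIntegral.integral_congr_ae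
    filter_upwards [hderiv_eq] with t ht hmem'
    rw [ht hmem']
  have hclen : clen γ = ∫ t in (0:ℝ)..1, f t := by
    apply intervalIntegral.integral_congr_ae
    filter_upwards [hderiv_eq] with t ht hmem'
    rw [ht hmem']
  have hd₁ : 0 < dD D z₁ := hdpos _ h₁
  have hd₂ : 0 < dD D z₂ := hdpos _ h₂
  have bound1 : ∀ t ∈ Icc (0:ℝ) 1, g t ≤ dD D z₁ + ∫ u in (0:ℝ)..t, f u := by
    intro t ht
    have hdist : ‖γ t - γ 0‖ ≤ ∫ u in (0:ℝ)..t, f u := distBound γ hs le_rfl ht.1 ht.2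
    have hle : dD D (γ t) ≤ dD D z₁ + dist (γ t) z₁ := Metric.infDist_le_infDist_add_dist
    rw [← h0, dist_eq_norm] at hle
    simp only [hgdef]
    rw [← h0]
    linarith
  have key1 : Real.log (1 + (∫ u in (0:ℝ)..1, f u) / dD D z₁)
      ≤ ∫ t in (0:ℝ)..1, f t / g t := logInt f g _ hd₁ hf hf0 hg hg0 bound1
  have hmap : MapsTo (fun u : ℝ => 1 - u) (Icc 0 1) (Icc 0 1) := by
    intro u hu
    simp only [mem_Icc] at hu ⊢
    constructor <;> linarith [hu.1, hu.2]
  have hcont1 : ContinuousOn (fun u : ℝ => 1 - u) (Icc (0:ℝ) 1) :=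
    (continuous_const.sub continuous_id).continuousOn
  have hF : ContinuousOn (fun u => f (1 - u)) (Icc 0 1) := hf.comp hcont1 hmap
  have hG : ContinuousOn (fun u => g (1 - u)) (Icc 0 1) := hg.comp hcont1 hmap
  have hcomp : ∀ t : ℝ, (∫ u in (0:ℝ)..t, f (1 - u)) = ∫ u in (1-t)..1, f u := by
    intro t
    have := intervalIntegral.integral_comp_sub_left (a := 0) (b := t) f 1
    simpa using this
  have bound2 : ∀ t ∈ Icc (0:ℝ) 1, g (1 - t) ≤ dD D z₂ + ∫ u in (0:ℝ)..t, f (1 - u) := by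
    intro t ht
    have h1t : (1 - t) ∈ Icc (0:ℝ) 1 := hmap ht
    have hdist : ‖γ 1 - γ (1-t)‖ ≤ ∫ u in (1-t)..1, f u := distBound γ hs h1t.1 h1t.2 le_rfl
    have hle : dD D (γ (1-t)) ≤ dD D z₂ + dist (γ (1-t)) z₂ := Metric.infDist_le_infDist_add_dist
    rw [← h1, dist_eq_norm, norm_sub_rev] at hle
    rw [hcomp t]
    simp only [hgdef]
    rw [← h1]
    linarith
  have key2 : Real.log (1 + (∫ u in (0:ℝ)..1, f (1 - u)) / dD D z₂)
      ≤ ∫ t in (0:ℝ)..1, f (1 - t) / g (1 - t) :=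
    logInt _ _ _ hd₂ hF (fun t _ => norm_nonneg _) hG (fun t ht => hg0 _ (hmap ht)) bound2
  have hFL : (∫ u in (0:ℝ)..1, f (1 - u)) = ∫ u in (0:ℝ)..1, f u := by
    have := hcomp 1
    simpa using this
  have hFG : (∫ t in (0:ℝ)..1, f (1 - t) / g (1 - t)) = ∫ t in (0:ℝ)..1, f t / g t := by
    have := intervalIntegral.integral_comp_sub_left (a := 0) (b := 1)
      (fun t => f t / g t) 1
    simpa using this
  rw [ge_iff_le, hqh, hclen]
  rcases le_total (dD D z₁) (dD D z₂) with hminc | hminc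
  · rw [min_eq_left hminc]
    exact key1
  · rw [min_eq_right hminc]
    rw [hFL, hFG] at key2
    exact key2
end

section
/- Let E be a real normed space, D ⊆ E open with nonempty boundary, and z₁, z₂ ∈ D with |z₁ - z₂| < d_D(z₁). Then k_D(z₁, z₂) ≤ log(1 + |z₁-z₂|/(d_D(z₁) - |z₁-z₂|)) ≤ |z₁-z₂|/(d_D(z₁) - |z₁-z₂|). -/
open Set Metric Real intervalIntegral

variable {E : Type*} [NormedAddCommGroup E] [NormedSpace ℝ E]
theorem stmt6 (D : Set E) (hD : IsOpen D) (hbd : (frontier D).Nonempty)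
    (z₁ z₂ : E) (h₁ : z₁ ∈ D) (h₂ : z₂ ∈ D)
    (hlt : dist z₁ z₂ < dD D z₁) :
    kD D z₁ z₂ ≤ Real.log (1 + dist z₁ z₂ / (dD D z₁ - dist z₁ z₂)) ∧
    Real.log (1 + dist z₁ z₂ / (dD D z₁ - dist z₁ z₂)) ≤
      dist z₁ z₂ / (dD D z₁ - dist z₁ z₂) := by
  set r := dist z₁ z₂ with hrdef
  set d := dD D z₁ with hddef
  have hr0 : 0 ≤ r := dist_nonneg
  have hdr : 0 < d - r := by linarith
  have hd0 : 0 < d := by linarith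
  constructor
  · -- the ball of radius d around z₁ is contained in D
    have hball : ball z₁ d ⊆ D := by
      intro y hy
      by_contra hyD
      have hconn : IsPreconnected (ball z₁ d) := (convex_ball z₁ d).isPreconnected
      have hfb : ∀ w ∈ ball z₁ d, w ∉ frontier D := by
        intro w hw hwf
        exact absurd (mem_ball'.1 hw) (not_lt.2 (infDist_le_dist_of_mem hwf))
      have hsub : ball z₁ d ⊆ D ∪ (closure D)ᶜ := by
        intro w hw
        by_cases hwD : w ∈ D
        · exact Or.inl hwD
        · refine Or.inr fun hcl => hfb w hw ⟨hcl, ?_⟩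
          rwa [hD.interior_eq]
      have hy2 : y ∈ (closure D)ᶜ := fun hcl => hfb y hy ⟨hcl, by rwa [hD.interior_eq]⟩
      obtain ⟨w, hw⟩ := hconn D (closure D)ᶜ hD isClosed_closure.isOpen_compl hsub
        ⟨z₁, mem_ball_self hd0, h₁⟩ ⟨y, hy, hy2⟩
      exact hw.2.2 (subset_closure hw.2.1)
    set v := z₂ - z₁ with hvdef
    have hv : ‖v‖ = r := by rw [hrdef, dist_eq_norm, ← norm_neg]; simp [hvdef]
    set γ : ℝ → E := fun t => z₁ + t • v with hγ
    have hderiv : ∀ t, HasDerivAt γ v t := by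
      intro t
      have h := ((hasDerivAt_id t).smul_const v).const_add z₁
      rw [one_smul] at h
      exact h
    have hdistγ : ∀ t, 0 ≤ t → dist z₁ (γ t) = t * r := by
      intro t ht
      simp [hγ, dist_eq_norm, norm_smul, abs_of_nonneg ht, hv]
    have hmemD : ∀ t ∈ Icc (0:ℝ) 1, γ t ∈ D := by
      intro t ht
      apply hball
      rw [mem_ball, dist_comm, hdistγ t ht.1]
      nlinarith [ht.1, ht.2]
    have hcurve : IsCurveIn D γ z₁ z₂ := by
      refine ⟨?_, by simp [hγ], by simp [hγ, hvdef], hmemD⟩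
      exact (contDiff_const.add (contDiff_id.smul contDiff_const)).contDiffOn
    have hlow : ∀ t ∈ Icc (0:ℝ) 1, d - t * r ≤ dD D (γ t) := by
      intro t ht
      have h := infDist_le_infDist_add_dist (x := z₁) (y := γ t) (s := frontier D)
      rw [hdistγ t ht.1] at h
      simp only [dD] at *
      linarith
    have hlowpos : ∀ t ∈ Icc (0:ℝ) 1, 0 < d - t * r := by
      intro t ht
      nlinarith [ht.1, ht.2]
    have hcontdd : ContinuousOn (fun t => dD D (γ t)) (Icc 0 1) := by
      apply Continuous.continuousOn
      exact (continuous_infDist_pt (frontier D)).comp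
        (continuous_const.add (continuous_id.smul continuous_const))
    -- rewrite qhLen
    have hql : qhLen D γ = ∫ t in (0:ℝ)..1, r / dD D (γ t) := by
      unfold qhLen
      congr 1
      ext t
      rw [(hderiv t).deriv, hv]
    have hint1 : IntervalIntegrable (fun t => r / dD D (γ t)) MeasureTheory.volume 0 1 := by
      apply ContinuousOn.intervalIntegrable
      rw [uIcc_of_le zero_le_one]
      exact continuousOn_const.div hcontdd fun t ht =>
        ne_of_gt (lt_of_lt_of_le (hlowpos t ht) (hlow t ht))
    have hint2 : IntervalIntegrable (fun t => r / (d - t * r)) MeasureTheory.volume 0 1 := by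
      apply ContinuousOn.intervalIntegrable
      rw [uIcc_of_le zero_le_one]
      exact continuousOn_const.div
        (continuousOn_const.sub (continuousOn_id.mul continuousOn_const))
        fun t ht => ne_of_gt (hlowpos t ht)
    have hmono : qhLen D γ ≤ ∫ t in (0:ℝ)..1, r / (d - t * r) := by
      rw [hql]
      apply intervalIntegral.integral_mono_on zero_le_one hint1 hint2
      intro t ht
      exact div_le_div_of_nonneg_left hr0 (hlowpos t ht) (hlow t ht)
      -- careful: need r/dD ≤ r/(d-tr) since dD ≥ d - tr > 0
    have hcalc : (∫ t in (0:ℝ)..1, r / (d - t * r)) = Real.log (1 + r / (d - r)) := by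
      have hder : ∀ t ∈ uIcc (0:ℝ) 1,
          HasDerivAt (fun t : ℝ => -Real.log (d - t * r)) (r / (d - t * r)) t := by
        intro t ht
        rw [uIcc_of_le zero_le_one] at ht
        have hne : d - t * r ≠ 0 := ne_of_gt (hlowpos t ht)
        have hg : HasDerivAt (fun t : ℝ => d - t * r) (-r) t := by
          simpa using ((hasDerivAt_id t).mul_const r).const_sub d
        have h2 := ((Real.hasDerivAt_log hne).comp t hg).neg
        rw [show r / (d - t * r) = -((d - t * r)⁻¹ * -r) by ring]
        exact h2
      have key := intervalIntegral.integral_eq_sub_of_hasDerivAt hder hint2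
      rw [key]
      have h1 : (1:ℝ) + r / (d - r) = d / (d - r) := by field_simp; ring
      rw [h1, Real.log_div (ne_of_gt hd0) (ne_of_gt hdr)]
      ring_nf
    have hbdd : BddBelow {l : ℝ | ∃ γ : ℝ → E, IsCurveIn D γ z₁ z₂ ∧ l = qhLen D γ} := by
      refine ⟨0, fun l hl => ?_⟩
      obtain ⟨γ', _, rfl⟩ := hl
      exact intervalIntegral.integral_nonneg zero_le_one fun u _ =>
        div_nonneg (norm_nonneg _) infDist_nonneg
    calc kD D z₁ z₂ ≤ qhLen D γ := csInf_le hbdd ⟨γ, hcurve, rfl⟩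
      _ ≤ ∫ t in (0:ℝ)..1, r / (d - t * r) := hmono
      _ = _ := hcalc
  · have hx : 0 < 1 + r / (d - r) := by positivity
    have := Real.log_le_sub_one_of_pos hx
    linarith
end

section
/- Let D be a c-uniform domain in a real normed space E (c ≥ 1), i.e., every pair of points z₁, z₂ ∈ D can be joined by a rectifiable arc α in D with ℓ(α) ≤ c|z₁-z₂| and min(ℓ(α[z₁,z]), ℓ(α[z₂,z])) ≤ c·d_D(z) for all z ∈ α. Then for all z₁, z₂ ∈ D, k_D(z₁, z₂) ≤ 4c²·log(1 + |z₁-z₂|/min(d_D(z₁), d_D(z₂))) + 4c², i.e., k_D(z₁,z₂) ≤ 4c²(j_D(z₁,z₂) + 1). -/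
open Set Metric Real intervalIntegral

variable {E : Type*} [NormedAddCommGroup E] [NormedSpace ℝ E]


open MeasureTheory


lemma half_bound (h ρ : ℝ → ℝ) (b d₀ c : ℝ) (hb : 0 ≤ b)
    (hh : ContinuousOn h (Icc 0 b)) (hh0 : ∀ t ∈ Icc 0 b, 0 ≤ h t)
    (hρ : ContinuousOn ρ (Icc 0 b)) (hρ0 : ∀ t ∈ Icc 0 b, 0 < ρ t)
    (hd : 0 < d₀) (hc : 1 ≤ c)
    (hyp1 : ∀ t ∈ Icc 0 b, d₀ - (∫ u in (0:ℝ)..t, h u) ≤ ρ t)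
    (hyp2 : ∀ t ∈ Icc 0 b, (∫ u in (0:ℝ)..t, h u) / c ≤ ρ t) :
    ∫ t in (0:ℝ)..b, h t / ρ t ≤
      Real.log (c+1) + c * Real.log 2 + c * Real.log (1 + (∫ u in (0:ℝ)..b, h u) / d₀) := by
  set s : ℝ → ℝ := fun t => ∫ u in (0:ℝ)..t, h u with hs
  have hc0 : (0:ℝ) < c := lt_of_lt_of_le one_pos hc
  have hc1 : (0:ℝ) < c + 1 := by linarith
  -- integrability of h on subintervals
  have hi : ∀ p q : ℝ, p ∈ Icc 0 b → q ∈ Icc 0 b → IntervalIntegrable h volume p q := by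
    intro p q hp hq
    apply (hh.mono _).intervalIntegrable
    rw [uIcc_eq_union]
    exact union_subset (Icc_subset_Icc hp.1 hq.2) (Icc_subset_Icc hq.1 hp.2)
  -- monotonicity of s
  have hadd : ∀ p q : ℝ, p ∈ Icc 0 b → q ∈ Icc 0 b → s q = s p + ∫ u in p..q, h u := by
    intro p q hp hq
    rw [hs]
    simp only
    rw [← intervalIntegral.integral_add_adjacent_intervals (hi 0 p (left_mem_Icc.2 hb) hp)
      (hi p q hp hq)]
  have hmono : ∀ p q : ℝ, p ∈ Icc 0 b → q ∈ Icc 0 b → p ≤ q → s p ≤ s q := by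
    intro p q hp hq hpq
    rw [hadd p q hp hq]
    have : 0 ≤ ∫ u in p..q, h u := by
      apply intervalIntegral.integral_nonneg hpq
      intro u hu; exact hh0 u ⟨le_trans hp.1 hu.1, le_trans hu.2 hq.2⟩
    linarith
  have hs0 : s 0 = 0 := intervalIntegral.integral_same
  have hsnn : ∀ t ∈ Icc 0 b, 0 ≤ s t := by
    intro t ht; rw [← hs0]; exact hmono 0 t (left_mem_Icc.2 hb) ht ht.1
  set L : ℝ := s b with hL
  have hL0 : 0 ≤ L := hsnn b (right_mem_Icc.2 hb)
  have hsleL : ∀ t ∈ Icc 0 b, s t ≤ L := fun t ht =>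
    hmono t b ht (right_mem_Icc.2 hb) ht.2
  -- continuity of s
  have hscont : ContinuousOn s (Icc 0 b) := by
    have := intervalIntegral.continuousOn_primitive_interval
      (f := h) (μ := volume) (a := (0:ℝ)) (b := b) ?_
    · rwa [uIcc_of_le hb] at this
    · rw [uIcc_of_le hb]; exact hh.integrableOn_Icc
  -- derivative of s
  have hsderiv : ∀ t ∈ Ioo 0 b, HasDerivAt s (h t) t := by
    intro t ht
    have hmem : Icc (0:ℝ) b ∈ nhds t := Icc_mem_nhds ht.1 ht.2
    exact intervalIntegral.integral_hasDerivAt_right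
      (hi 0 t (left_mem_Icc.2 hb) ⟨ht.1.le, ht.2.le⟩)
      ⟨Icc 0 b, hmem, hh.aestronglyMeasurable measurableSet_Icc⟩
      (hh.continuousAt hmem)
  -- s₀
  set s₀ : ℝ := c * d₀ / (c + 1) with hs₀def
  have hs₀pos : 0 < s₀ := by positivity
  have hds₀ : d₀ - s₀ = d₀ / (c + 1) := by
    rw [hs₀def]
    field_simp
    ring
  have hs₀lt : s₀ < d₀ := by
    rw [hs₀def, div_lt_iff₀ hc1]; nlinarith
  -- IVT to find ta
  obtain ⟨ta, hta, hsta⟩ : ∃ ta ∈ Icc 0 b, s ta = min s₀ L := by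
    have := intermediate_value_Icc hb hscont
    have hmem : min s₀ L ∈ Icc (s 0) (s b) := by
      constructor
      · rw [hs0]; exact le_min hs₀pos.le hL0
      · exact min_le_right _ _
    obtain ⟨ta, h1, h2⟩ := this hmem
    exact ⟨ta, h1, h2⟩
  have htab : ta ≤ b := hta.2
  have hta0 : 0 ≤ ta := hta.1
  -- positivity of d₀ - s t on [0, ta]
  have hpos1 : ∀ t ∈ Icc 0 ta, d₀ / (c+1) ≤ d₀ - s t := by
    intro t ht
    have ht' : t ∈ Icc 0 b := ⟨ht.1, le_trans ht.2 htab⟩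
    have : s t ≤ s ta := hmono t ta ht' hta ht.2
    have : s t ≤ s₀ := le_trans this (hsta ▸ min_le_left _ _)
    rw [← hds₀]; linarith
  have hpos1' : ∀ t ∈ Icc 0 ta, 0 < d₀ - s t := by
    intro t ht
    calc (0:ℝ) < d₀ / (c+1) := by positivity
    _ ≤ d₀ - s t := hpos1 t ht
  -- integrability of h/ρ
  have hρne : ∀ t ∈ Icc 0 b, ρ t ≠ 0 := fun t ht => (hρ0 t ht).ne'
  have hcont_div : ContinuousOn (fun t => h t / ρ t) (Icc 0 b) := hh.div hρ hρne
  have hIccsub1 : Icc (0:ℝ) ta ⊆ Icc 0 b := Icc_subset_Icc le_rfl htab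
  have hIccsub2 : Icc ta b ⊆ Icc 0 b := Icc_subset_Icc hta0 le_rfl
  -- Piece 1 bound
  have piece1 : ∫ t in (0:ℝ)..ta, h t / ρ t ≤ Real.log (c+1) := by
    have hcont2 : ContinuousOn (fun t => h t / (d₀ - s t)) (Icc 0 ta) :=
      (hh.mono hIccsub1).div ((continuousOn_const.sub (hscont.mono hIccsub1)))
        (fun t ht => (hpos1' t ht).ne')
    have step1 : ∫ t in (0:ℝ)..ta, h t / ρ t ≤ ∫ t in (0:ℝ)..ta, h t / (d₀ - s t) := by
      apply intervalIntegral.integral_mono_on hta0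
        ((hcont_div.mono hIccsub1).intervalIntegrable_of_Icc hta0)
        (hcont2.intervalIntegrable_of_Icc hta0)
      intro t ht
      have ht' : t ∈ Icc 0 b := hIccsub1 ht
      gcongr
      · exact hh0 t ht'
      · exact hpos1' t ht
      · exact hyp1 t ht'
    have step2 : ∫ t in (0:ℝ)..ta, h t / (d₀ - s t)
        = (- Real.log (d₀ - s ta)) - (- Real.log (d₀ - s 0)) := by
      apply intervalIntegral.integral_eq_sub_of_hasDeriv_right_of_le hta0
      · apply ContinuousOn.neg
        apply ContinuousOn.log
        · exact continuousOn_const.sub (hscont.mono hIccsub1)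
        · exact fun t ht => (hpos1' t ht).ne'
      · intro t ht
        have htb : t ∈ Ioo 0 b := ⟨ht.1, lt_of_lt_of_le ht.2 htab⟩
        have hd1 : HasDerivAt (fun y => Real.log (d₀ - s y)) ((-h t) / (d₀ - s t)) t := by
          have := ((hsderiv t htb).const_sub d₀).log (hpos1' t ⟨ht.1.le, ht.2.le⟩).ne'
          simpa using this
        have := hd1.neg
        simp only [neg_div, neg_neg] at this
        exact this.hasDerivWithinAt
      · exact hcont2.intervalIntegrable_of_Icc hta0
    refine step1.trans ?_
    rw [step2, hs0, sub_zero]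
    have h1 : Real.log (d₀ / (c+1)) ≤ Real.log (d₀ - s ta) :=
      Real.log_le_log (by positivity) (hpos1 ta (right_mem_Icc.2 hta0))
    rw [Real.log_div hd.ne' hc1.ne'] at h1
    linarith
  -- Piece 2 bound
  have piece2 : ∫ t in ta..b, h t / ρ t ≤ c * Real.log 2 + c * Real.log (1 + L / d₀) := by
    have hlog2 : 0 ≤ Real.log 2 := Real.log_nonneg one_le_two
    have hlogL : 0 ≤ Real.log (1 + L / d₀) := Real.log_nonneg (by
      have : 0 ≤ L / d₀ := by positivity
      linarith)
    by_cases hcase : L ≤ s₀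
    · -- degenerate case : the curve already ended
      have hstaL : s ta = L := by rw [hsta, min_eq_right hcase]
      have hzero : (∫ t in ta..b, h t) = 0 := by
        have := hadd ta b hta (right_mem_Icc.2 hb)
        rw [hstaL] at this
        rw [hL] at this
        linarith
      have hbound : ∫ t in ta..b, h t / ρ t ≤ ∫ t in ta..b, h t * ((c+1)/d₀) := by
        apply intervalIntegral.integral_mono_on htab
          ((hcont_div.mono hIccsub2).intervalIntegrable_of_Icc htab)
          (((hh.mono hIccsub2).mul continuousOn_const).intervalIntegrable_of_Icc htab)
        intro t ht
        have ht' : t ∈ Icc 0 b := hIccsub2 ht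
        have hρge : d₀ / (c+1) ≤ ρ t := by
          have h1 : s t ≤ L := hsleL t ht'
          have h2 : d₀ - s t ≤ ρ t := hyp1 t ht'
          have h3 : d₀ - s₀ ≤ d₀ - s t := by linarith
          rw [← hds₀]; linarith
        calc h t / ρ t ≤ h t / (d₀ / (c+1)) := by
              gcongr <;> first | exact hh0 t ht' | positivity | exact hρge
          _ = h t * ((c+1)/d₀) := by
              rw [div_div_eq_mul_div, mul_div_assoc]
      rw [intervalIntegral.integral_mul_const, hzero, zero_mul] at hbound
      have : 0 ≤ c * Real.log 2 + c * Real.log (1 + L / d₀) := by positivity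
      linarith
    · -- main case
      push_neg at hcase
      have hstaL : s ta = s₀ := by rw [hsta, min_eq_left hcase.le]
      have hLpos : 0 < L := lt_trans hs₀pos hcase
      have htapos : 0 < ta := by
        rcases lt_or_eq_of_le hta0 with h | h
        · exact h
        · exfalso
          rw [← h, hs0] at hstaL
          linarith
      have hspos : ∀ t ∈ Icc ta b, 0 < s t := by
        intro t ht
        have : s ta ≤ s t := hmono ta t hta (hIccsub2 ht) ht.1
        rw [hstaL] at this; linarith
      have hcont3 : ContinuousOn (fun t => c * h t / s t) (Icc ta b) := by
        apply ContinuousOn.div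
        · exact continuousOn_const.mul (hh.mono hIccsub2)
        · exact hscont.mono hIccsub2
        · exact fun t ht => (hspos t ht).ne'
      have step1 : ∫ t in ta..b, h t / ρ t ≤ ∫ t in ta..b, c * h t / s t := by
        apply intervalIntegral.integral_mono_on htab
          ((hcont_div.mono hIccsub2).intervalIntegrable_of_Icc htab)
          (hcont3.intervalIntegrable_of_Icc htab)
        intro t ht
        have ht' : t ∈ Icc 0 b := hIccsub2 ht
        have hρge : s t / c ≤ ρ t := hyp2 t ht'
        have hstpos : 0 < s t / c := div_pos (hspos t ht) hc0
        calc h t / ρ t ≤ h t / (s t / c) := by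
              gcongr <;> first | exact hh0 t ht' | exact hstpos | exact hρge
          _ = c * h t / s t := by
              rw [div_div_eq_mul_div]; ring
      have step2 : ∫ t in ta..b, c * h t / s t
          = (c * Real.log (s b)) - (c * Real.log (s ta)) := by
        apply intervalIntegral.integral_eq_sub_of_hasDeriv_right_of_le htab
        · exact continuousOn_const.mul ((hscont.mono hIccsub2).log
            (fun t ht => (hspos t ht).ne'))
        · intro t ht
          have htb : t ∈ Ioo 0 b := ⟨lt_trans htapos ht.1, ht.2⟩
          have hstpos : 0 < s t := hspos t ⟨ht.1.le, ht.2.le⟩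
          have hd1 : HasDerivAt (fun y => c * Real.log (s y)) (c * (h t / s t)) t :=
            ((hsderiv t htb).log hstpos.ne').const_mul c
          have : c * (h t / s t) = c * h t / s t := by ring
          rw [this] at hd1
          exact hd1.hasDerivWithinAt
        · exact hcont3.intervalIntegrable_of_Icc htab
      have hrat : L / s₀ ≤ 2 * (1 + L / d₀) := by
        rw [hs₀def, div_div_eq_mul_div, div_le_iff₀ (by positivity)]
        have hexp : (1 + L / d₀) * d₀ = d₀ + L := by field_simp
        nlinarith [hLpos, hd, hc0]
      have hlograt : Real.log L - Real.log s₀ ≤ Real.log 2 + Real.log (1 + L / d₀) := by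
        have h1 : Real.log (L / s₀) ≤ Real.log (2 * (1 + L / d₀)) :=
          Real.log_le_log (by positivity) hrat
        rw [Real.log_div hLpos.ne' hs₀pos.ne'] at h1
        rw [Real.log_mul two_ne_zero (by positivity)] at h1
        exact h1
      refine step1.trans ?_
      rw [step2, ← hL, hstaL]
      nlinarith [hlograt, hc0]
  -- combine
  have hsplit : (∫ t in (0:ℝ)..ta, h t / ρ t) + ∫ t in ta..b, h t / ρ t
      = ∫ t in (0:ℝ)..b, h t / ρ t := by
    apply intervalIntegral.integral_add_adjacent_intervals
    · exact (hcont_div.mono hIccsub1).intervalIntegrable_of_Icc hta0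
    · exact (hcont_div.mono hIccsub2).intervalIntegrable_of_Icc htab
  rw [← hsplit]
  have : (∫ u in (0:ℝ)..b, h u) = L := rfl
  rw [this]
  linarith

set_option maxHeartbeats 2000000 in
theorem stmt9 (D : Set E) (hD : IsOpen D) (hbd : (frontier D).Nonempty)
    (c : ℝ) (hc : 1 ≤ c) (hunif : IsUniform D c)
    (z₁ z₂ : E) (h₁ : z₁ ∈ D) (h₂ : z₂ ∈ D) :
    kD D z₁ z₂ ≤ 4 * c ^ 2 * (jD D z₁ z₂ + 1) := by
  have hc0 : (0:ℝ) < c := lt_of_lt_of_le one_pos hc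
  -- positivity of dD on D
  have hdpos : ∀ z ∈ D, 0 < dD D z := by
    intro z hz
    have hznf : z ∉ frontier D := by
      intro hf
      have : z ∈ D ∩ frontier D := ⟨hz, hf⟩
      rw [hD.inter_frontier_eq] at this
      exact this
    exact (isClosed_frontier.notMem_iff_infDist_pos hbd).1 hznf
  have hd₁ : 0 < dD D z₁ := hdpos z₁ h₁
  have hd₂ : 0 < dD D z₂ := hdpos z₂ h₂
  set m : ℝ := min (dD D z₁) (dD D z₂) with hm
  have hm0 : 0 < m := lt_min hd₁ hd₂
  set r : ℝ := dist z₁ z₂ with hr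
  have hr0 : 0 ≤ r := dist_nonneg
  -- the uniform curve
  obtain ⟨γ, hcurve, hclen, hcig⟩ := hunif z₁ h₁ z₂ h₂
  obtain ⟨hγdiff, hγ0, hγ1, hγD⟩ := hcurve
  have hγcont : ContinuousOn γ (Icc 0 1) := hγdiff.continuousOn
  set g : ℝ → E := derivWithin γ (Icc 0 1) with hg
  have hgcont : ContinuousOn g (Icc 0 1) :=
    hγdiff.continuousOn_derivWithin (uniqueDiffOn_Icc one_pos) le_rfl
  have hhcont : ContinuousOn (fun t => ‖g t‖) (Icc 0 1) := hgcont.norm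
  have hderiv_eq : ∀ t ∈ Ioo (0:ℝ) 1, deriv γ t = g t := by
    intro t ht
    exact (derivWithin_of_mem_nhds (Icc_mem_nhds ht.1 ht.2)).symm
  -- a.e. t ≠ 1
  have hane : ∀ᵐ t : ℝ, t ≠ (1:ℝ) := by
    have h0 : MeasureTheory.volume ({(1:ℝ)} : Set ℝ) = 0 := measure_singleton 1
    rw [MeasureTheory.ae_iff]
    convert h0 using 2
    ext x
    simp
  -- congruence of length integrals
  have key : ∀ p q : ℝ, 0 ≤ p → p ≤ 1 → 0 ≤ q → q ≤ 1 →
      (∫ t in p..q, ‖deriv γ t‖) = ∫ t in p..q, ‖g t‖ := by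
    intro p q hp hp1 hq hq1
    apply intervalIntegral.integral_congr_ae
    filter_upwards [hane] with t ht1 htm
    rw [Set.mem_uIoc] at htm
    have htIoo : t ∈ Ioo (0:ℝ) 1 := by
      rcases htm with h | h
      · exact ⟨lt_of_le_of_lt hp h.1, lt_of_le_of_ne (le_trans h.2 hq1) ht1⟩
      · exact ⟨lt_of_le_of_lt hq h.1, lt_of_le_of_ne (le_trans h.2 hp1) ht1⟩
    rw [hderiv_eq t htIoo]
  -- the primitive s
  set s : ℝ → ℝ := fun t => ∫ u in (0:ℝ)..t, ‖g u‖ with hsdef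
  have hi : ∀ p q : ℝ, p ∈ Icc (0:ℝ) 1 → q ∈ Icc (0:ℝ) 1 →
      IntervalIntegrable (fun t => ‖g t‖) MeasureTheory.volume p q := by
    intro p q hp hq
    apply (hhcont.mono _).intervalIntegrable
    rw [uIcc_eq_union]
    exact union_subset (Icc_subset_Icc hp.1 hq.2) (Icc_subset_Icc hq.1 hp.2)
  have hadd : ∀ p q : ℝ, p ∈ Icc (0:ℝ) 1 → q ∈ Icc (0:ℝ) 1 →
      s q = s p + ∫ u in p..q, ‖g u‖ := by
    intro p q hp hq
    rw [hsdef]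
    simp only
    rw [← intervalIntegral.integral_add_adjacent_intervals
      (hi 0 p (left_mem_Icc.2 zero_le_one) hp) (hi p q hp hq)]
  have hs0 : s 0 = 0 := intervalIntegral.integral_same
  set L : ℝ := s 1 with hL
  have hmono : ∀ p q : ℝ, p ∈ Icc (0:ℝ) 1 → q ∈ Icc (0:ℝ) 1 → p ≤ q → s p ≤ s q := by
    intro p q hp hq hpq
    rw [hadd p q hp hq]
    have : 0 ≤ ∫ u in p..q, ‖g u‖ := by
      apply intervalIntegral.integral_nonneg hpq
      intro u _; exact norm_nonneg _
    linarith
  have hL0 : 0 ≤ L := by rw [hL, ← hs0]; exact hmono 0 1 ⟨le_rfl, zero_le_one⟩ ⟨zero_le_one, le_rfl⟩ zero_le_one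
  -- HasDerivAt for γ in the interior
  have hdu : ∀ u ∈ Ioo (0:ℝ) 1, HasDerivAt γ (g u) u := by
    intro u hu
    have hmem : Icc (0:ℝ) 1 ∈ nhds u := Icc_mem_nhds hu.1 hu.2
    exact ((hγdiff.differentiableOn one_ne_zero u ⟨hu.1.le, hu.2.le⟩).hasDerivWithinAt).hasDerivAt hmem
  -- chord ≤ arc, general
  have hchord : ∀ p ∈ Icc (0:ℝ) 1, ∀ q ∈ Icc (0:ℝ) 1, p ≤ q →
      ‖γ q - γ p‖ ≤ ∫ u in p..q, ‖g u‖ := by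
    intro p hp q hq hpq
    rcases eq_or_ne (γ q - γ p) 0 with hz | hz
    · rw [hz, norm_zero]
      apply intervalIntegral.integral_nonneg hpq
      intro u _; exact norm_nonneg _
    · obtain ⟨ℓ, hℓnorm, hℓval⟩ := exists_dual_vector ℝ (γ q - γ p) (norm_ne_zero_iff.2 hz)
      have hsubIcc : Icc p q ⊆ Icc (0:ℝ) 1 := Icc_subset_Icc hp.1 hq.2
      have hftc : ∫ u in p..q, ℓ (g u) = ℓ (γ q) - ℓ (γ p) := by
        apply intervalIntegral.integral_eq_sub_of_hasDeriv_right_of_le hpq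
          (ℓ.continuous.comp_continuousOn (hγcont.mono hsubIcc))
        · intro u hu
          have hu' : u ∈ Ioo (0:ℝ) 1 := ⟨lt_of_le_of_lt hp.1 hu.1, lt_of_lt_of_le hu.2 hq.2⟩
          exact (ℓ.hasFDerivAt.comp_hasDerivAt u (hdu u hu')).hasDerivWithinAt
        · exact (ℓ.continuous.comp_continuousOn (hgcont.mono hsubIcc)).intervalIntegrable_of_Icc hpq
      have hmonoint : ∫ u in p..q, ℓ (g u) ≤ ∫ u in p..q, ‖g u‖ := by
        apply intervalIntegral.integral_mono_on hpq
          ((ℓ.continuous.comp_continuousOn (hgcont.mono hsubIcc)).intervalIntegrable_of_Icc hpq)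
          ((hhcont.mono hsubIcc).intervalIntegrable_of_Icc hpq)
        intro u _
        calc ℓ (g u) ≤ ‖ℓ (g u)‖ := le_abs_self _
          _ ≤ ‖ℓ‖ * ‖g u‖ := ℓ.le_opNorm _
          _ = ‖g u‖ := by rw [hℓnorm, one_mul]
      have hℓval' : ℓ (γ q - γ p) = ‖γ q - γ p‖ := by exact_mod_cast hℓval
      have : ‖γ q - γ p‖ = ℓ (γ q) - ℓ (γ p) := by
        rw [← hℓval', map_sub]
      rw [this, ← hftc]
      exact hmonoint
  have hchord1 : ∀ t ∈ Icc (0:ℝ) 1, ‖γ t - z₁‖ ≤ s t := by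
    intro t ht
    rw [← hγ0]
    exact hchord 0 ⟨le_rfl, zero_le_one⟩ t ht ht.1
  have hchord2 : ∀ t ∈ Icc (0:ℝ) 1, ‖γ t - z₂‖ ≤ L - s t := by
    intro t ht
    have hsub : L - s t = ∫ u in t..(1:ℝ), ‖g u‖ := by
      have := hadd t 1 ht ⟨zero_le_one, le_rfl⟩
      rw [hL]; linarith
    rw [hsub, ← norm_neg, neg_sub, ← hγ1]
    exact hchord t ht 1 ⟨zero_le_one, le_rfl⟩ ht.2
  -- Lipschitz bounds for dD along γ
  have hlip1 : ∀ t ∈ Icc (0:ℝ) 1, dD D z₁ - s t ≤ dD D (γ t) := by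
    intro t ht
    have h1 : Metric.infDist z₁ (frontier D) ≤
        Metric.infDist (γ t) (frontier D) + dist z₁ (γ t) :=
      Metric.infDist_le_infDist_add_dist
    have h2 : dist z₁ (γ t) ≤ s t := by
      rw [dist_comm, dist_eq_norm]; exact hchord1 t ht
    simp only [dD] at *
    linarith
  have hlip2 : ∀ t ∈ Icc (0:ℝ) 1, dD D z₂ - (L - s t) ≤ dD D (γ t) := by
    intro t ht
    have h1 : Metric.infDist z₂ (frontier D) ≤
        Metric.infDist (γ t) (frontier D) + dist z₂ (γ t) :=
      Metric.infDist_le_infDist_add_dist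
    have h2 : dist z₂ (γ t) ≤ L - s t := by
      rw [dist_comm, dist_eq_norm]; exact hchord2 t ht
    simp only [dD] at *
    linarith
  -- the uniformity condition in terms of s
  have hcig' : ∀ t ∈ Icc (0:ℝ) 1, min (s t) (L - s t) ≤ c * dD D (γ t) := by
    intro t ht
    have h1 := hcig t ht
    have e1 : sublen γ 0 t = s t := key 0 t le_rfl zero_le_one ht.1 ht.2
    have e2 : sublen γ t 1 = L - s t := by
      rw [sublen, key t 1 ht.1 ht.2 zero_le_one le_rfl]
      have := hadd t 1 ht ⟨zero_le_one, le_rfl⟩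
      rw [hL]; linarith
    rw [e1, e2] at h1
    exact h1
  -- continuity of s, IVT midpoint
  have hscont : ContinuousOn s (Icc 0 1) := by
    have := intervalIntegral.continuousOn_primitive_interval
      (f := fun t => ‖g t‖) (μ := MeasureTheory.volume) (a := (0:ℝ)) (b := 1) ?_
    · rwa [uIcc_of_le zero_le_one] at this
    · rw [uIcc_of_le zero_le_one]; exact hhcont.integrableOn_Icc
  obtain ⟨tm, htm, hstm⟩ : ∃ tm ∈ Icc (0:ℝ) 1, s tm = L / 2 := by
    have hIVT := intermediate_value_Icc zero_le_one hscont
    have hmem : L / 2 ∈ Icc (s 0) (s 1) := by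
      rw [hs0]
      constructor
      · positivity
      · rw [← hL]; linarith
    obtain ⟨tm, ht1, ht2⟩ := hIVT hmem
    exact ⟨tm, ht1, ht2⟩
  have hρcont : ContinuousOn (fun t => dD D (γ t)) (Icc 0 1) :=
    (Metric.continuous_infDist_pt (frontier D)).comp_continuousOn hγcont
  have hρpos : ∀ t ∈ Icc (0:ℝ) 1, 0 < dD D (γ t) := fun t ht => hdpos _ (hγD t ht)
  have hsub1 : Icc (0:ℝ) tm ⊆ Icc (0:ℝ) 1 := Icc_subset_Icc le_rfl htm.2
  have hsub2 : Icc tm (1:ℝ) ⊆ Icc (0:ℝ) 1 := Icc_subset_Icc htm.1 le_rfl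
  -- first half
  have B1 : ∫ t in (0:ℝ)..tm, ‖g t‖ / dD D (γ t) ≤
      Real.log (c+1) + c * Real.log 2 + c * Real.log (1 + (L/2) / dD D z₁) := by
    have hres := half_bound (fun t => ‖g t‖) (fun t => dD D (γ t)) tm (dD D z₁) c htm.1
      (hhcont.mono hsub1) (fun t _ => norm_nonneg _) (hρcont.mono hsub1)
      (fun t ht => hρpos t (hsub1 ht)) hd₁ hc
      (fun t ht => hlip1 t (hsub1 ht))
      (by
        intro t ht
        have ht' := hsub1 ht
        have h1 := hcig' t ht'
        have hstt : s t ≤ L / 2 := by rw [← hstm]; exact hmono t tm ht' htm ht.2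
        have hmin : min (s t) (L - s t) = s t := min_eq_left (by linarith)
        rw [hmin] at h1
        show s t / c ≤ dD D (γ t)
        rw [div_le_iff₀ hc0, mul_comm]
        linarith)
    have heval : (∫ u in (0:ℝ)..tm, ‖g u‖) = L / 2 := hstm
    rwa [heval] at hres
  -- second half, via reversal
  have hb' : (0:ℝ) ≤ 1 - tm := by linarith [htm.2]
  have hmap : ∀ u ∈ Icc (0:ℝ) (1 - tm), 1 - u ∈ Icc tm 1 := by
    intro u hu
    constructor
    · linarith [hu.2]
    · linarith [hu.1]
  have hsrev : ∀ u ∈ Icc (0:ℝ) (1 - tm), (∫ x in (0:ℝ)..u, ‖g (1 - x)‖) = L - s (1 - u) := by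
    intro u hu
    have h1 : (∫ x in (0:ℝ)..u, ‖g (1 - x)‖) = ∫ x in (1-u)..(1:ℝ), ‖g x‖ := by
      have := intervalIntegral.integral_comp_sub_left (a := (0:ℝ)) (b := u)
        (fun x => ‖g x‖) 1
      simpa using this
    rw [h1]
    have h2 := hadd (1-u) 1 (hsub2 (hmap u hu)) ⟨zero_le_one, le_rfl⟩
    rw [hL]
    linarith
  have B2 : ∫ t in tm..(1:ℝ), ‖g t‖ / dD D (γ t) ≤
      Real.log (c+1) + c * Real.log 2 + c * Real.log (1 + (L/2) / dD D z₂) := by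
    have hcomp : ContinuousOn (fun u => ‖g (1-u)‖) (Icc 0 (1-tm)) := by
      apply ContinuousOn.comp (hhcont.mono hsub2)
        ((continuous_const.sub continuous_id).continuousOn)
      intro u hu; exact hmap u hu
    have hρcomp : ContinuousOn (fun u => dD D (γ (1-u))) (Icc 0 (1-tm)) := by
      apply ContinuousOn.comp (hρcont.mono hsub2)
        ((continuous_const.sub continuous_id).continuousOn)
      intro u hu; exact hmap u hu
    have hres := half_bound (fun u => ‖g (1-u)‖) (fun u => dD D (γ (1-u))) (1-tm) (dD D z₂) c hb'
      hcomp (fun u _ => norm_nonneg _) hρcomp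
      (fun u hu => hρpos _ (hsub2 (hmap u hu))) hd₂ hc
      (by
        intro u hu
        show dD D z₂ - (∫ x in (0:ℝ)..u, ‖g (1 - x)‖) ≤ dD D (γ (1-u))
        rw [hsrev u hu]
        have := hlip2 (1-u) (hsub2 (hmap u hu))
        linarith)
      (by
        intro u hu
        show (∫ x in (0:ℝ)..u, ‖g (1 - x)‖) / c ≤ dD D (γ (1-u))
        rw [hsrev u hu, div_le_iff₀ hc0, mul_comm]
        have h1 := hcig' (1-u) (hsub2 (hmap u hu))
        have hge : L / 2 ≤ s (1-u) := by
          rw [← hstm]; exact hmono tm (1-u) htm (hsub2 (hmap u hu)) (by linarith [hu.2])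
        have hmin : min (s (1-u)) (L - s (1-u)) = L - s (1-u) := min_eq_right (by linarith)
        rw [hmin] at h1
        linarith)
    have heval : (∫ x in (0:ℝ)..(1-tm), ‖g (1 - x)‖) = L / 2 := by
      have h1 := hsrev (1-tm) (right_mem_Icc.2 hb')
      have h2 : (1:ℝ) - (1 - tm) = tm := by ring
      rw [h2] at h1
      rw [h1, hstm]
      ring
    rw [heval] at hres
    have hflip : (∫ u in (0:ℝ)..(1-tm), ‖g (1-u)‖ / dD D (γ (1-u)))
        = ∫ t in tm..(1:ℝ), ‖g t‖ / dD D (γ t) := by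
      have := intervalIntegral.integral_comp_sub_left (a := (0:ℝ)) (b := 1-tm)
        (fun t => ‖g t‖ / dD D (γ t)) 1
      simpa using this
    rwa [hflip] at hres
  -- qhLen in terms of g, and splitting
  have hρdiv : ContinuousOn (fun t => ‖g t‖ / dD D (γ t)) (Icc 0 1) :=
    hhcont.div hρcont (fun t ht => (hρpos t ht).ne')
  have hqh : qhLen D γ = ∫ t in (0:ℝ)..1, ‖g t‖ / dD D (γ t) := by
    rw [qhLen]
    apply intervalIntegral.integral_congr_ae
    filter_upwards [hane] with t ht1 htm'
    rw [uIoc_of_le zero_le_one] at htm'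
    have htIoo : t ∈ Ioo (0:ℝ) 1 := ⟨htm'.1, lt_of_le_of_ne htm'.2 ht1⟩
    rw [hderiv_eq t htIoo]
  have hsplit : (∫ t in (0:ℝ)..tm, ‖g t‖ / dD D (γ t))
      + (∫ t in tm..(1:ℝ), ‖g t‖ / dD D (γ t))
      = ∫ t in (0:ℝ)..1, ‖g t‖ / dD D (γ t) := by
    apply intervalIntegral.integral_add_adjacent_intervals
    · exact (hρdiv.mono hsub1).intervalIntegrable_of_Icc htm.1
    · exact (hρdiv.mono hsub2).intervalIntegrable_of_Icc htm.2
  -- kD ≤ qhLen γ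
  have hkd : kD D z₁ z₂ ≤ qhLen D γ := by
    have hmem : qhLen D γ ∈ {l : ℝ | ∃ γ' : ℝ → E, IsCurveIn D γ' z₁ z₂ ∧ l = qhLen D γ'} :=
      ⟨γ, ⟨hγdiff, hγ0, hγ1, hγD⟩, rfl⟩
    have hbb : BddBelow {l : ℝ | ∃ γ' : ℝ → E, IsCurveIn D γ' z₁ z₂ ∧ l = qhLen D γ'} := by
      refine ⟨0, fun l hl => ?_⟩
      obtain ⟨γ', _, rfl⟩ := hl
      apply intervalIntegral.integral_nonneg zero_le_one
      intro u _
      have hnn : 0 ≤ dD D (γ' u) := Metric.infDist_nonneg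
      positivity
    exact csInf_le hbb hmem
  -- length bound
  have hLcr : L ≤ c * r := by
    have e1 : clen γ = s 1 := key 0 1 le_rfl zero_le_one zero_le_one le_rfl
    rw [hL, ← e1, hr]
    exact hclen
  -- log estimates
  have hJ0 : 0 ≤ jD D z₁ z₂ := by
    apply Real.log_nonneg
    have : 0 ≤ dist z₁ z₂ / min (dD D z₁) (dD D z₂) := by positivity
    linarith
  have hloggen : ∀ d : ℝ, 0 < d → m ≤ d →
      Real.log (1 + (L/2) / d) ≤ Real.log c + jD D z₁ z₂ := by
    intro d hd hmd
    have harg : 1 + (L/2) / d ≤ c * (1 + r / m) := by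
      have h1 : (L/2) / d ≤ (c * r / 2) / m := by
        apply div_le_div₀ (by positivity) (by linarith) hm0 hmd
      have h2 : c * r / 2 / m ≤ c * (r / m) := by
        rw [div_le_iff₀ hm0]
        have : c * (r / m) * m = c * r := by field_simp
        rw [this]
        nlinarith [hr0, hc0]
      have h3 : (1:ℝ) ≤ c := hc
      have h4 : 0 ≤ c * (r/m) := by positivity
      calc 1 + (L/2)/d ≤ 1 + c * (r/m) := by linarith
        _ ≤ c * (1 + r/m) := by nlinarith
    have hpos : (0:ℝ) < 1 + (L/2)/d := by positivity
    calc Real.log (1 + (L/2)/d) ≤ Real.log (c * (1 + r/m)) :=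
          Real.log_le_log hpos harg
      _ = Real.log c + Real.log (1 + r/m) := by
          rw [Real.log_mul hc0.ne' (by positivity)]
      _ = Real.log c + jD D z₁ z₂ := by rw [jD, ← hr, ← hm]
  have hlog1 := hloggen (dD D z₁) hd₁ (min_le_left _ _)
  have hlog2 := hloggen (dD D z₂) hd₂ (min_le_right _ _)
  -- final numeric assembly
  have lc1 : Real.log (c+1) ≤ c := by
    have := Real.log_le_sub_one_of_pos (show (0:ℝ) < c + 1 by linarith)
    linarith
  have lc2 : Real.log 2 ≤ 1 := by
    have := Real.log_le_sub_one_of_pos (show (0:ℝ) < 2 by norm_num)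
    linarith
  have lc3 : Real.log c ≤ c - 1 := by
    have := Real.log_le_sub_one_of_pos hc0
    linarith
  have htotal : qhLen D γ ≤ 2 * Real.log (c+1) + 2 * c * Real.log 2
      + 2 * c * Real.log c + 2 * c * jD D z₁ z₂ := by
    rw [hqh, ← hsplit]
    have b1 := B1.trans (by nlinarith [hlog1, hc0] :
      Real.log (c+1) + c * Real.log 2 + c * Real.log (1 + (L/2) / dD D z₁)
        ≤ Real.log (c+1) + c * Real.log 2 + c * (Real.log c + jD D z₁ z₂))
    have b2 := B2.trans (by nlinarith [hlog2, hc0] :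
      Real.log (c+1) + c * Real.log 2 + c * Real.log (1 + (L/2) / dD D z₂)
        ≤ Real.log (c+1) + c * Real.log 2 + c * (Real.log c + jD D z₁ z₂))
    linarith
  have hfinal : 2 * Real.log (c+1) + 2 * c * Real.log 2
      + 2 * c * Real.log c + 2 * c * jD D z₁ z₂ ≤ 4 * c ^ 2 * (jD D z₁ z₂ + 1) := by
    nlinarith [hJ0, hc0, hc, lc1, lc2, lc3, mul_nonneg (sub_nonneg.2 hc) hJ0,
      sq_nonneg (c - 1), mul_pos hc0 hc0]
  linarith [hkd, htotal, hfinal]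
end
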